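/- For every additive shift space U ⊆ A^{ℤ²}, the rectangular entropy equals the genuinely two-dimensional entropy: h_r(U) = h(U), where h(U) = sup{h_Ω(U) : Ω is an expanding system of finite subsets of ℤ² with limsup_{n→∞} |∂Ω(n)|/|Ω(n)| = 0}. -/

import Mathlib

open Filter
open scoped Classical

/-- The `m × n` rectangular lattice `Z_{m×n}(p)` with bottom-left corner `p`. -/
def Zrect (m n : ℕ) (p : ℤ × ℤ) : Finset (ℤ × ℤ) :=
  (Finset.range m ×ˢ Finset.range n).image (fun ab => (p.1 + (ab.1 : ℤ), p.2 + (ab.2 : ℤ)))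

/-- The number of patterns of `U` seen on the finite window `L`. -/
noncomputable def patternCount {A : Type*} (U : Set ((ℤ × ℤ) → A)) (L : Finset (ℤ × ℤ)) : ℕ :=
  Set.ncard ((fun x => fun p : L => x (p : ℤ × ℤ)) '' U)

/-- An additive shift space: nonempty, closed, translation invariant. -/
def IsShiftSpace {A : Type*} [TopologicalSpace A] (U : Set ((ℤ × ℤ) → A)) : Prop :=
  U.Nonempty ∧ IsClosed U ∧ ∀ v : ℤ × ℤ, ∀ x ∈ U, (fun p => x (p + v)) ∈ U

/-- An expanding system of finite sublattices of `ℤ²`. -/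
def IsExpandingSystem (Ω : ℕ → Finset (ℤ × ℤ)) : Prop :=
  (∀ n, Ω n ⊂ Ω (n + 1)) ∧ ∀ p : ℤ × ℤ, ∃ n, p ∈ Ω n

/-- The interior of a finite lattice. -/
def latInterior (L : Finset (ℤ × ℤ)) : Finset (ℤ × ℤ) :=
  L.filter (fun p => (p.1 + 1, p.2) ∈ L ∧ (p.1, p.2 + 1) ∈ L ∧ (p.1 + 1, p.2 + 1) ∈ L)

/-- The boundary of a finite lattice. -/
def latBoundary (L : Finset (ℤ × ℤ)) : Finset (ℤ × ℤ) := L \ latInterior L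

/-- The rectangular entropy `h_r(U)`. -/
noncomputable def rectEntropy {A : Type*} (U : Set ((ℤ × ℤ) → A)) : ℝ :=
  ⨅ mn : ℕ × ℕ, (1 / (((mn.1 + 1) * (mn.2 + 1) : ℕ) : ℝ)) *
    Real.log (patternCount U (Zrect (mn.1 + 1) (mn.2 + 1) (0, 0)))

/-- The entropy `h_Ω(U)` along an expanding system `Ω`. -/
noncomputable def entropyAlong {A : Type*} (U : Set ((ℤ × ℤ) → A)) (Ω : ℕ → Finset (ℤ × ℤ)) : ℝ :=
  Filter.limsup (fun n => (1 / ((Ω n).card : ℝ)) * Real.log (patternCount U (Ω n))) Filter.atTop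

/-- `Ω_{k,l}(n)`: the union of grid rectangles `Z_{k×l}((ak,bl))` contained in `L`. -/
noncomputable def gridPart (k l : ℕ) (L : Finset (ℤ × ℤ)) : Finset (ℤ × ℤ) :=
  L.filter (fun p => ∃ a b : ℤ,
    p ∈ Zrect k l ((k : ℤ) * a, (l : ℤ) * b) ∧ Zrect k l ((k : ℤ) * a, (l : ℤ) * b) ⊆ L)

/-- `β_{k,l}` : the size of the complement of the grid part. -/
noncomputable def betaKL (k l : ℕ) (L : Finset (ℤ × ℤ)) : ℕ := (L \ gridPart k l L).card

/-- `α_{k,l}` : the number of grid rectangles contained in `L`. -/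
noncomputable def alphaKL (k l : ℕ) (L : Finset (ℤ × ℤ)) : ℕ :=
  Set.ncard {ab : ℤ × ℤ | Zrect k l ((k : ℤ) * ab.1, (l : ℤ) * ab.2) ⊆ L}

/-- A tessellation of `ℤ²`. -/
def IsTessellation (T : Finset (ℤ × ℤ)) : Prop :=
  ∃ v : ℕ → ℤ × ℤ,
    (∀ i j : ℕ, i ≠ j → Disjoint (T.image (· + v i)) (T.image (· + v j))) ∧
    ∀ p : ℤ × ℤ, ∃ i : ℕ, p ∈ T.image (· + v i)

/-- Euclidean distance between points of `ℤ²`. -/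
noncomputable def euclDist (p q : ℤ × ℤ) : ℝ :=
  Real.sqrt (((p.1 - q.1 : ℤ) : ℝ) ^ 2 + ((p.2 - q.2 : ℤ) : ℝ) ^ 2)

/-- Block gluing with gap `M`. -/
def BlockGluingWithGap {A : Type*} (U : Set ((ℤ × ℤ) → A)) (M : ℕ) : Prop :=
  ∀ (m₁ n₁ m₂ n₂ : ℕ) (c₁ c₂ : ℤ × ℤ),
    (∀ p ∈ Zrect m₁ n₁ c₁, ∀ q ∈ Zrect m₂ n₂ c₂, (M : ℝ) ≤ euclDist p q) →
    ∀ x₁ ∈ U, ∀ x₂ ∈ U, ∃ x ∈ U,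
      (∀ p ∈ Zrect m₁ n₁ c₁, x p = x₁ p) ∧ ∀ q ∈ Zrect m₂ n₂ c₂, x q = x₂ q

/-- Block gluing. -/
def IsBlockGluing {A : Type*} (U : Set ((ℤ × ℤ) → A)) : Prop :=
  ∃ M : ℕ, 1 ≤ M ∧ BlockGluingWithGap U M

/-- A full shift on a sub-alphabet. -/
def IsFullShift {A : Type*} (U : Set ((ℤ × ℤ) → A)) : Prop :=
  ∃ B : Set A, U = {x | ∀ p : ℤ × ℤ, x p ∈ B}

/-- Shift of finite type. -/
def IsSFT {A : Type*} (U : Set ((ℤ × ℤ) → A)) : Prop :=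
  ∃ (F : Finset (ℤ × ℤ)) (P : Set (F → A)),
    U = {x | ∀ v : ℤ × ℤ, (fun p : F => x (v + (p : ℤ × ℤ))) ∈ P}

/-- `(i,j)` has horizontal length `m` in `L`. -/
def HasHorizLength (L : Finset (ℤ × ℤ)) (p : ℤ × ℤ) (m : ℕ) : Prop :=
  1 ≤ m ∧ (∃ c : ℤ × ℤ, p ∈ Zrect m 1 c ∧ Zrect m 1 c ⊆ L) ∧
    ∀ m' : ℕ, m < m' → ¬ ∃ c : ℤ × ℤ, p ∈ Zrect m' 1 c ∧ Zrect m' 1 c ⊆ L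

/-- `(i,j)` has vertical length `m` in `L`. -/
def HasVertLength (L : Finset (ℤ × ℤ)) (p : ℤ × ℤ) (m : ℕ) : Prop :=
  1 ≤ m ∧ (∃ c : ℤ × ℤ, p ∈ Zrect 1 m c ∧ Zrect 1 m c ⊆ L) ∧
    ∀ m' : ℕ, m < m' → ¬ ∃ c : ℤ × ℤ, p ∈ Zrect 1 m' c ∧ Zrect 1 m' c ⊆ L

noncomputable def betaHoriz (m : ℕ) (L : Finset (ℤ × ℤ)) : ℕ :=
  (L.filter (fun p => HasHorizLength L p m)).card

noncomputable def betaVert (m : ℕ) (L : Finset (ℤ × ℤ)) : ℕ :=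
  (L.filter (fun p => HasVertLength L p m)).card

/-- The one-dimensional sublattice segment `{s • v : 0 ≤ s ≤ n-1}`. -/
def lineSegment (v : ℤ × ℤ) (n : ℕ) : Finset (ℤ × ℤ) :=
  (Finset.range n).image (fun s : ℕ => ((s : ℤ) * v.1, (s : ℤ) * v.2))

/-- The projectional entropy along the one-dimensional sublattice generated by `v`. -/
noncomputable def projEntropy {A : Type*} (U : Set ((ℤ × ℤ) → A)) (v : ℤ × ℤ) : ℝ :=
  ⨅ n : ℕ, (1 / (n + 1 : ℝ)) * Real.log (patternCount U (lineSegment v (n + 1)))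

/-- `ĥ⁽¹⁾(U)`: supremum of projectional entropies over one-dimensional sublattices. -/
noncomputable def hHatOne {A : Type*} (U : Set ((ℤ × ℤ) → A)) : ℝ :=
  ⨆ v : {w : ℤ × ℤ // w ≠ 0}, projEntropy U (v : ℤ × ℤ)

/-- The horizontal golden-mean shift. -/
def goldenMeanShift : Set ((ℤ × ℤ) → Fin 2) :=
  {x | ∀ p : ℤ × ℤ, x p * x (p.1 + 1, p.2) = 0}

/-- The sequence `a_k`: `a_1 = 2`, `a_2 = 3`, `a_k = a_{k-1} + a_{k-2}`. -/
def aSeq : ℕ → ℕ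
  | 0 => 1
  | 1 => 2
  | (k + 2) => aSeq (k + 1) + aSeq k


set_option linter.unusedSectionVars false
set_option linter.unusedTactic false
set_option linter.unreachableTactic false

section Basics

variable {A : Type*} [Fintype A]

lemma mem_Zrect {k l : ℕ} {c p : ℤ × ℤ} :
    p ∈ Zrect k l c ↔ c.1 ≤ p.1 ∧ p.1 < c.1 + k ∧ c.2 ≤ p.2 ∧ p.2 < c.2 + l := by
  simp only [Zrect, Finset.mem_image, Finset.mem_product, Finset.mem_range, Prod.exists]
  constructor
  · rintro ⟨a, b, ⟨ha, hb⟩, rfl⟩; simp; omega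
  · rintro ⟨h1, h2, h3, h4⟩
    exact ⟨(p.1 - c.1).toNat, (p.2 - c.2).toNat, ⟨by omega, by omega⟩, by
      ext <;> simp <;> omega⟩

lemma card_Zrect (k l : ℕ) (c : ℤ × ℤ) : (Zrect k l c).card = k * l := by
  rw [Zrect, Finset.card_image_of_injective, Finset.card_product, Finset.card_range,
    Finset.card_range]
  intro a b hab
  simp only [Prod.ext_iff] at hab
  ext
  · omega
  · omega

/-- The pattern set of `U` on a window `L`. -/
def patSet (U : Set ((ℤ × ℤ) → A)) (L : Finset (ℤ × ℤ)) : Set ((↥L) → A) :=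
  (fun x => fun p : L => x (p : ℤ × ℤ)) '' U

lemma patternCount_eq (U : Set ((ℤ × ℤ) → A)) (L : Finset (ℤ × ℤ)) :
    patternCount U L = (patSet U L).ncard := rfl

lemma patSet_finite (U : Set ((ℤ × ℤ) → A)) (L : Finset (ℤ × ℤ)) : (patSet U L).Finite :=
  Set.toFinite _

lemma one_le_patternCount {U : Set ((ℤ × ℤ) → A)} (hU : U.Nonempty) (L : Finset (ℤ × ℤ)) :
    1 ≤ patternCount U L := by
  rw [patternCount_eq]
  exact (Set.ncard_pos (patSet_finite U L)).2 (hU.image _)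

lemma patternCount_le_pow (U : Set ((ℤ × ℤ) → A)) (L : Finset (ℤ × ℤ)) :
    patternCount U L ≤ Fintype.card A ^ L.card := by
  rw [patternCount_eq]
  calc (patSet U L).ncard ≤ (Set.univ : Set ((↥L) → A)).ncard :=
        Set.ncard_le_ncard (Set.subset_univ _) Set.finite_univ
    _ = Fintype.card A ^ L.card := by
        rw [Set.ncard_univ, Nat.card_fun, Nat.card_eq_fintype_card,
          Nat.card_eq_finsetCard]

lemma patternCount_translate {U : Set ((ℤ × ℤ) → A)}
    (hinv : ∀ v : ℤ × ℤ, ∀ x ∈ U, (fun p => x (p + v)) ∈ U)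
    (L : Finset (ℤ × ℤ)) (v : ℤ × ℤ) :
    patternCount U (L.image (· + v)) = patternCount U L := by
  have key : ∀ (M : Finset (ℤ × ℤ)) (w : ℤ × ℤ),
      patternCount U (M.image (· + w)) ≤ patternCount U M := by
    intro M w
    rw [patternCount_eq, patternCount_eq]
    refine Set.ncard_le_ncard_of_injOn
      (fun g => fun p : M => g ⟨(p : ℤ × ℤ) + w, Finset.mem_image_of_mem _ p.2⟩) ?_ ?_
      (patSet_finite U M)
    · rintro g ⟨x, hx, rfl⟩
      exact ⟨fun p => x (p + w), hinv w x hx, rfl⟩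
    · rintro g ⟨x, hx, rfl⟩ g' ⟨x', hx', rfl⟩ h
      funext q
      obtain ⟨p, hp, hq⟩ := Finset.mem_image.1 q.2
      have := congrFun h ⟨p, hp⟩
      simp only at this ⊢
      rw [show (q : ℤ × ℤ) = p + w from hq.symm.trans rfl] at *
      exact this
  refine le_antisymm (key L v) ?_
  have : L = (L.image (· + v)).image (· + (-v)) := by
    ext p; simp only [Finset.mem_image]
    constructor
    · intro hp; exact ⟨p + v, ⟨p, hp, rfl⟩, by simp⟩
    · rintro ⟨q, ⟨r, hr, rfl⟩, rfl⟩; simpa using hr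
  conv_lhs => rw [this]
  exact key _ _

end Basics

set_option linter.unusedSectionVars false

section Grid

variable {k l : ℕ} (hk : 1 ≤ k) (hl : 1 ≤ l)

/-- The grid block with index `ab`. -/
def blockOf (k l : ℕ) (ab : ℤ × ℤ) : Finset (ℤ × ℤ) :=
  Zrect k l ((k : ℤ) * ab.1, (l : ℤ) * ab.2)

lemma mem_blockOf {ab p : ℤ × ℤ} :
    p ∈ blockOf k l ab ↔ (k : ℤ) * ab.1 ≤ p.1 ∧ p.1 < (k : ℤ) * ab.1 + k ∧
      (l : ℤ) * ab.2 ≤ p.2 ∧ p.2 < (l : ℤ) * ab.2 + l := mem_Zrect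

lemma aux_div_unique {d : ℤ} (hd : 0 < d) {a a' x : ℤ}
    (h1 : d * a ≤ x) (h2 : x < d * a + d) (h3 : d * a' ≤ x) (h4 : x < d * a' + d) : a = a' := by
  by_contra hne
  rcases lt_or_gt_of_ne hne with h | h
  · have : d * (a + 1) ≤ d * a' := by
      apply mul_le_mul_of_nonneg_left (by omega) (le_of_lt hd)
    nlinarith
  · have : d * (a' + 1) ≤ d * a := by
      apply mul_le_mul_of_nonneg_left (by omega) (le_of_lt hd)
    nlinarith

lemma blockOf_unique {ab ab' p : ℤ × ℤ} (hk : 1 ≤ k) (hl : 1 ≤ l)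
    (h : p ∈ blockOf k l ab) (h' : p ∈ blockOf k l ab') : ab = ab' := by
  rw [mem_blockOf] at h h'
  have hk' : (0 : ℤ) < k := by exact_mod_cast hk
  have hl' : (0 : ℤ) < l := by exact_mod_cast hl
  exact Prod.ext (aux_div_unique hk' h.1 h.2.1 h'.1 h'.2.1)
    (aux_div_unique hl' h.2.2.1 h.2.2.2 h'.2.2.1 h'.2.2.2)

lemma mem_blockOf_self (hk : 1 ≤ k) (hl : 1 ≤ l) (p : ℤ × ℤ) :
    p ∈ blockOf k l (p.1 / k, p.2 / l) := by
  have hk' : (0 : ℤ) < k := by exact_mod_cast hk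
  have hl' : (0 : ℤ) < l := by exact_mod_cast hl
  rw [mem_blockOf]
  dsimp only
  have e1 := Int.mul_ediv_add_emod p.1 k
  have e2 := Int.mul_ediv_add_emod p.2 l
  have m1 := Int.emod_nonneg p.1 (show (k:ℤ) ≠ 0 by omega)
  have m2 := Int.emod_lt_of_pos p.1 hk'
  have m3 := Int.emod_nonneg p.2 (show (l:ℤ) ≠ 0 by omega)
  have m4 := Int.emod_lt_of_pos p.2 hl'
  refine ⟨by omega, by omega, by omega, by omega⟩

end Grid

section GridPart

variable {k l : ℕ}

/-- Indices of grid blocks contained in `L`. -/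
def goodIdx (k l : ℕ) (L : Finset (ℤ × ℤ)) : Set (ℤ × ℤ) := {ab | blockOf k l ab ⊆ L}

lemma corner_mem_blockOf (hk : 1 ≤ k) (hl : 1 ≤ l) (ab : ℤ × ℤ) :
    ((k : ℤ) * ab.1, (l : ℤ) * ab.2) ∈ blockOf k l ab := by
  rw [mem_blockOf]; dsimp only; omega

lemma corner_injective (hk : 1 ≤ k) (hl : 1 ≤ l) :
    Function.Injective (fun ab : ℤ × ℤ => ((k : ℤ) * ab.1, (l : ℤ) * ab.2)) := by
  intro a b hab
  simp only [Prod.ext_iff] at hab ⊢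
  have hk' : (k : ℤ) ≠ 0 := by omega
  have hl' : (l : ℤ) ≠ 0 := by omega
  exact ⟨mul_left_cancel₀ hk' hab.1, mul_left_cancel₀ hl' hab.2⟩

lemma goodIdx_finite (hk : 1 ≤ k) (hl : 1 ≤ l) (L : Finset (ℤ × ℤ)) :
    (goodIdx k l L).Finite := by
  apply Set.Finite.of_finite_image (f := fun ab => ((k : ℤ) * ab.1, (l : ℤ) * ab.2))
  · apply L.finite_toSet.subset
    rintro _ ⟨ab, hab, rfl⟩
    exact hab (corner_mem_blockOf hk hl ab)
  · exact (corner_injective hk hl).injOn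

lemma alphaKL_eq (hk : 1 ≤ k) (hl : 1 ≤ l) (L : Finset (ℤ × ℤ)) :
    alphaKL k l L = ((goodIdx_finite hk hl L).toFinset).card := by
  rw [alphaKL]
  exact Set.ncard_eq_toFinset_card _ (goodIdx_finite hk hl L)

lemma mem_gridPart {L : Finset (ℤ × ℤ)} {p : ℤ × ℤ} :
    p ∈ gridPart k l L ↔ ∃ ab, p ∈ blockOf k l ab ∧ blockOf k l ab ⊆ L := by
  rw [gridPart, Finset.mem_filter]
  constructor
  · rintro ⟨hpL, a, b, h1, h2⟩; exact ⟨(a, b), h1, h2⟩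
  · rintro ⟨ab, h1, h2⟩; exact ⟨h2 h1, ab.1, ab.2, h1, h2⟩

lemma gridPart_eq_biUnion (hk : 1 ≤ k) (hl : 1 ≤ l) (L : Finset (ℤ × ℤ)) :
    gridPart k l L = ((goodIdx_finite hk hl L).toFinset).biUnion (blockOf k l) := by
  ext p
  rw [mem_gridPart, Finset.mem_biUnion]
  constructor
  · rintro ⟨ab, h1, h2⟩
    exact ⟨ab, by simpa [Set.Finite.mem_toFinset, goodIdx] using h2, h1⟩
  · rintro ⟨ab, hab, h1⟩
    exact ⟨ab, h1, by simpa [Set.Finite.mem_toFinset, goodIdx] using hab⟩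

lemma card_gridPart (hk : 1 ≤ k) (hl : 1 ≤ l) (L : Finset (ℤ × ℤ)) :
    (gridPart k l L).card = alphaKL k l L * (k * l) := by
  rw [gridPart_eq_biUnion hk hl, Finset.card_biUnion, alphaKL_eq hk hl]
  · rw [Finset.sum_congr rfl (fun ab _ => card_Zrect k l ((k : ℤ) * ab.1, (l : ℤ) * ab.2)),
      Finset.sum_const, smul_eq_mul]
  · intro x _ y _ hxy
    rw [Function.onFun, Finset.disjoint_left]
    intro p hp hp'
    exact hxy (blockOf_unique hk hl hp hp')

lemma alpha_mul_le (hk : 1 ≤ k) (hl : 1 ≤ l) (L : Finset (ℤ × ℤ)) :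
    alphaKL k l L * (k * l) ≤ L.card := by
  rw [← card_gridPart hk hl]
  apply Finset.card_le_card
  intro p hp
  obtain ⟨ab, h1, h2⟩ := mem_gridPart.1 hp
  exact h2 h1

end GridPart

section Boundary

lemma mem_latBoundary {L : Finset (ℤ × ℤ)} {p : ℤ × ℤ} :
    p ∈ latBoundary L ↔ p ∈ L ∧
      ¬((p.1 + 1, p.2) ∈ L ∧ (p.1, p.2 + 1) ∈ L ∧ (p.1 + 1, p.2 + 1) ∈ L) := by
  rw [latBoundary, Finset.mem_sdiff, latInterior, Finset.mem_filter]
  tauto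

lemma exists_gap_right (L : Finset (ℤ × ℤ)) (r : ℤ × ℤ) :
    ∃ t : ℕ, (r.1 + (t : ℤ) + 1, r.2) ∉ L := by
  by_contra h
  push_neg at h
  exact Set.infinite_of_injective_forall_mem
    (f := fun t : ℕ => ((r.1 + (t : ℤ) + 1, r.2) : ℤ × ℤ))
    (fun a b hab => by simpa [Prod.ext_iff] using hab)
    (fun t => h t) L.finite_toSet

lemma exists_gap_up (L : Finset (ℤ × ℤ)) (r : ℤ × ℤ) :
    ∃ t : ℕ, (r.1, r.2 + (t : ℤ) + 1) ∉ L := by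
  by_contra h
  push_neg at h
  exact Set.infinite_of_injective_forall_mem
    (f := fun t : ℕ => ((r.1, r.2 + (t : ℤ) + 1) : ℤ × ℤ))
    (fun a b hab => by simpa [Prod.ext_iff] using hab)
    (fun t => h t) L.finite_toSet

/-- The right end of the maximal horizontal run of `L` containing `r`. -/
noncomputable def rightEnd (L : Finset (ℤ × ℤ)) (r : ℤ × ℤ) : ℤ × ℤ :=
  (r.1 + (Nat.find (exists_gap_right L r) : ℤ), r.2)

/-- The top end of the maximal vertical run of `L` containing `r`. -/
noncomputable def topEnd (L : Finset (ℤ × ℤ)) (r : ℤ × ℤ) : ℤ × ℤ :=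
  (r.1, r.2 + (Nat.find (exists_gap_up L r) : ℤ))

lemma rightEnd_seg {L : Finset (ℤ × ℤ)} {r : ℤ × ℤ} (hr : r ∈ L) {s : ℕ}
    (hs : (s : ℤ) ≤ (Nat.find (exists_gap_right L r) : ℤ)) : (r.1 + (s : ℤ), r.2) ∈ L := by
  rcases Nat.eq_zero_or_pos s with h0 | h0
  · subst h0; simpa using hr
  · obtain ⟨s', rfl⟩ := Nat.exists_eq_add_of_lt h0
    have hlt : 0 + s' + 1 - 1 < Nat.find (exists_gap_right L r) := by
      push_cast at hs; omega
    have := Nat.find_min (exists_gap_right L r) hlt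
    rw [not_not] at this
    convert this using 2
    push_cast; ring

lemma rightEnd_mem {L : Finset (ℤ × ℤ)} {r : ℤ × ℤ} (hr : r ∈ L) : rightEnd L r ∈ L :=
  rightEnd_seg hr le_rfl

lemma rightEnd_gap (L : Finset (ℤ × ℤ)) (r : ℤ × ℤ) :
    ((rightEnd L r).1 + 1, (rightEnd L r).2) ∉ L := by
  have := Nat.find_spec (exists_gap_right L r)
  simpa [rightEnd] using this

lemma rightEnd_boundary {L : Finset (ℤ × ℤ)} {r : ℤ × ℤ} (hr : r ∈ L) :
    rightEnd L r ∈ latBoundary L := by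
  rw [mem_latBoundary]
  exact ⟨rightEnd_mem hr, fun h => rightEnd_gap L r h.1⟩

lemma rightEnd_inj {L : Finset (ℤ × ℤ)} {r r' : ℤ × ℤ} (hr : r ∈ L) (hr' : r' ∈ L)
    (hg : (r.1 - 1, r.2) ∉ L) (hg' : (r'.1 - 1, r'.2) ∉ L)
    (he : rightEnd L r = rightEnd L r') : r = r' := by
  have h2 : r.2 = r'.2 := by simpa [rightEnd] using congrArg Prod.snd he
  have h1 := congrArg Prod.fst he
  simp only [rightEnd] at h1
  by_contra hne
  have hne1 : r.1 ≠ r'.1 := fun h => hne (Prod.ext h h2)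
  rcases lt_or_gt_of_ne hne1 with h | h
  · -- r.1 < r'.1 : then (r'.1 - 1, r.2) is in the run of r, contradiction
    have hub : r'.1 - 1 - r.1 ≤ (Nat.find (exists_gap_right L r) : ℤ) := by
      have : r'.1 ≤ r'.1 + (Nat.find (exists_gap_right L r') : ℤ) := by omega
      omega
    have := rightEnd_seg hr (s := (r'.1 - 1 - r.1).toNat) (by omega)
    rw [show (r.1 + ((r'.1 - 1 - r.1).toNat : ℤ), r.2) = (r'.1 - 1, r'.2) by
      rw [Prod.mk.injEq]; omega] at this
    exact hg' this
  · have hub : r.1 - 1 - r'.1 ≤ (Nat.find (exists_gap_right L r') : ℤ) := by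
      have : r.1 ≤ r.1 + (Nat.find (exists_gap_right L r) : ℤ) := by omega
      omega
    have := rightEnd_seg hr' (s := (r.1 - 1 - r'.1).toNat) (by omega)
    rw [show (r'.1 + ((r.1 - 1 - r'.1).toNat : ℤ), r'.2) = (r.1 - 1, r.2) by
      rw [Prod.mk.injEq]; omega] at this
    exact hg this

lemma topEnd_seg {L : Finset (ℤ × ℤ)} {r : ℤ × ℤ} (hr : r ∈ L) {s : ℕ}
    (hs : (s : ℤ) ≤ (Nat.find (exists_gap_up L r) : ℤ)) : (r.1, r.2 + (s : ℤ)) ∈ L := by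
  rcases Nat.eq_zero_or_pos s with h0 | h0
  · subst h0; simpa using hr
  · obtain ⟨s', rfl⟩ := Nat.exists_eq_add_of_lt h0
    have hlt : 0 + s' + 1 - 1 < Nat.find (exists_gap_up L r) := by
      push_cast at hs; omega
    have := Nat.find_min (exists_gap_up L r) hlt
    rw [not_not] at this
    convert this using 2
    push_cast; ring

lemma topEnd_mem {L : Finset (ℤ × ℤ)} {r : ℤ × ℤ} (hr : r ∈ L) : topEnd L r ∈ L :=
  topEnd_seg hr le_rfl

lemma topEnd_gap (L : Finset (ℤ × ℤ)) (r : ℤ × ℤ) :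
    ((topEnd L r).1, (topEnd L r).2 + 1) ∉ L := by
  have := Nat.find_spec (exists_gap_up L r)
  simpa [topEnd] using this

lemma topEnd_boundary {L : Finset (ℤ × ℤ)} {r : ℤ × ℤ} (hr : r ∈ L) :
    topEnd L r ∈ latBoundary L := by
  rw [mem_latBoundary]
  exact ⟨topEnd_mem hr, fun h => topEnd_gap L r h.2.1⟩

lemma topEnd_inj {L : Finset (ℤ × ℤ)} {r r' : ℤ × ℤ} (hr : r ∈ L) (hr' : r' ∈ L)
    (hg : (r.1, r.2 - 1) ∉ L) (hg' : (r'.1, r'.2 - 1) ∉ L)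
    (he : topEnd L r = topEnd L r') : r = r' := by
  have h1 : r.1 = r'.1 := by simpa [topEnd] using congrArg Prod.fst he
  have h2 := congrArg Prod.snd he
  simp only [topEnd] at h2
  by_contra hne
  have hne2 : r.2 ≠ r'.2 := fun h => hne (Prod.ext h1 h)
  rcases lt_or_gt_of_ne hne2 with h | h
  · have := topEnd_seg hr (s := (r'.2 - 1 - r.2).toNat) (by
      have : r'.2 ≤ r'.2 + (Nat.find (exists_gap_up L r') : ℤ) := by omega
      omega)
    rw [show (r.1, r.2 + ((r'.2 - 1 - r.2).toNat : ℤ)) = (r'.1, r'.2 - 1) by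
      rw [Prod.mk.injEq]; omega] at this
    exact hg' this
  · have := topEnd_seg hr' (s := (r.2 - 1 - r'.2).toNat) (by
      have : r.2 ≤ r.2 + (Nat.find (exists_gap_up L r) : ℤ) := by omega
      omega)
    rw [show (r'.1, r'.2 + ((r.2 - 1 - r'.2).toNat : ℤ)) = (r.1, r.2 - 1) by
      rw [Prod.mk.injEq]; omega] at this
    exact hg this

end Boundary

section Charge

variable {k l : ℕ}

lemma adj_walk {k l : ℕ} {c : ℤ × ℤ} {L : Finset (ℤ × ℤ)} {q : ℤ × ℤ}
    (hq : q ∈ Zrect k l c) (hqL : q ∉ L) :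
    ∀ n : ℕ, ∀ p, p ∈ Zrect k l c → p ∈ L →
      ((p.1 - q.1).natAbs + (p.2 - q.2).natAbs = n) →
      ∃ r ∈ Zrect k l c, r ∈ L ∧
        ((r.1 + 1, r.2) ∉ L ∨ (r.1, r.2 + 1) ∉ L ∨ (r.1 - 1, r.2) ∉ L ∨ (r.1, r.2 - 1) ∉ L) := by
  intro n
  induction n using Nat.strong_induction_on with
  | _ n ih =>
    intro p hp hpL hn
    rw [mem_Zrect] at hp hq
    rcases lt_trichotomy p.1 q.1 with h1 | h1 | h1
    · set p' : ℤ × ℤ := (p.1 + 1, p.2) with hp'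
      by_cases hmem : p' ∈ L
      · exact ih ((p'.1 - q.1).natAbs + (p'.2 - q.2).natAbs) (by simp only [hp']; omega)
          p' (mem_Zrect.2 (by simp only [hp']; omega)) hmem rfl
      · exact ⟨p, mem_Zrect.2 (by omega), hpL, Or.inl hmem⟩
    · rcases lt_trichotomy p.2 q.2 with h2 | h2 | h2
      · set p' : ℤ × ℤ := (p.1, p.2 + 1) with hp'
        by_cases hmem : p' ∈ L
        · exact ih ((p'.1 - q.1).natAbs + (p'.2 - q.2).natAbs) (by simp only [hp']; omega)
            p' (mem_Zrect.2 (by simp only [hp']; omega)) hmem rfl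
        · exact ⟨p, mem_Zrect.2 (by omega), hpL, Or.inr (Or.inl hmem)⟩
      · exact absurd (show p = q from Prod.ext h1 h2 ▸ rfl) (fun h => hqL (h ▸ hpL))
      · set p' : ℤ × ℤ := (p.1, p.2 - 1) with hp'
        by_cases hmem : p' ∈ L
        · exact ih ((p'.1 - q.1).natAbs + (p'.2 - q.2).natAbs) (by simp only [hp']; omega)
            p' (mem_Zrect.2 (by simp only [hp']; omega)) hmem rfl
        · exact ⟨p, mem_Zrect.2 (by omega), hpL, Or.inr (Or.inr (Or.inr hmem))⟩
    · set p' : ℤ × ℤ := (p.1 - 1, p.2) with hp'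
      by_cases hmem : p' ∈ L
      · exact ih ((p'.1 - q.1).natAbs + (p'.2 - q.2).natAbs) (by simp only [hp']; omega)
          p' (mem_Zrect.2 (by simp only [hp']; omega)) hmem rfl
      · exact ⟨p, mem_Zrect.2 (by omega), hpL, Or.inr (Or.inr (Or.inl hmem))⟩

/-- Indices of grid blocks meeting `L` but not contained in `L`. -/
def badIdx (k l : ℕ) (L : Finset (ℤ × ℤ)) : Set (ℤ × ℤ) :=
  {ab | (∃ p ∈ blockOf k l ab, p ∈ L) ∧ ¬blockOf k l ab ⊆ L}

lemma badIdx_adj {L : Finset (ℤ × ℤ)} {ab : ℤ × ℤ} (h : ab ∈ badIdx k l L) :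
    ∃ r ∈ blockOf k l ab, r ∈ L ∧
      ((r.1 + 1, r.2) ∉ L ∨ (r.1, r.2 + 1) ∉ L ∨ (r.1 - 1, r.2) ∉ L ∨ (r.1, r.2 - 1) ∉ L) := by
  obtain ⟨⟨p, hp, hpL⟩, hns⟩ := h
  obtain ⟨q, hq, hqL⟩ := Finset.not_subset.1 hns
  exact adj_walk hq hqL _ p hp hpL rfl

/-- The boundary point charged to a bad block. -/
noncomputable def charge (k l : ℕ) (L : Finset (ℤ × ℤ)) (ab : ℤ × ℤ) : (ℤ × ℤ) × Fin 3 :=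
  if h : ∃ r, r ∈ blockOf k l ab ∧ r ∈ L ∧ ((r.1 + 1, r.2) ∉ L ∨ (r.1, r.2 + 1) ∉ L) then
    (h.choose, 0)
  else if h : ∃ r, r ∈ blockOf k l ab ∧ r ∈ L ∧ (r.1 - 1, r.2) ∉ L then
    (rightEnd L h.choose, 1)
  else if h : ∃ r, r ∈ blockOf k l ab ∧ r ∈ L ∧ (r.1, r.2 - 1) ∉ L then
    (topEnd L h.choose, 2)
  else ((0, 0), 0)

lemma charge_spec {L : Finset (ℤ × ℤ)} {ab : ℤ × ℤ} (h : ab ∈ badIdx k l L) :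
    ∃ r ∈ blockOf k l ab, r ∈ L ∧
      ((charge k l L ab = (r, 0) ∧ ((r.1 + 1, r.2) ∉ L ∨ (r.1, r.2 + 1) ∉ L)) ∨
       (charge k l L ab = (rightEnd L r, 1) ∧ (r.1 - 1, r.2) ∉ L) ∨
       (charge k l L ab = (topEnd L r, 2) ∧ (r.1, r.2 - 1) ∉ L)) := by
  rw [charge]
  split_ifs with h1 h2 h3
  · exact ⟨h1.choose, h1.choose_spec.1, h1.choose_spec.2.1,
      Or.inl ⟨rfl, h1.choose_spec.2.2⟩⟩
  · exact ⟨h2.choose, h2.choose_spec.1, h2.choose_spec.2.1,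
      Or.inr (Or.inl ⟨rfl, h2.choose_spec.2.2⟩)⟩
  · exact ⟨h3.choose, h3.choose_spec.1, h3.choose_spec.2.1,
      Or.inr (Or.inr ⟨rfl, h3.choose_spec.2.2⟩)⟩
  · exfalso
    obtain ⟨r, hr, hrL, hcase⟩ := badIdx_adj h
    rcases hcase with hc | hc | hc | hc
    · exact h1 ⟨r, hr, hrL, Or.inl hc⟩
    · exact h1 ⟨r, hr, hrL, Or.inr hc⟩
    · exact h2 ⟨r, hr, hrL, hc⟩
    · exact h3 ⟨r, hr, hrL, hc⟩

lemma charge_fst_mem {L : Finset (ℤ × ℤ)} {ab : ℤ × ℤ} (h : ab ∈ badIdx k l L) :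
    (charge k l L ab).1 ∈ latBoundary L := by
  obtain ⟨r, hr, hrL, hc | hc | hc⟩ := charge_spec h
  · rw [hc.1]
    rw [mem_latBoundary]
    refine ⟨hrL, fun hall => ?_⟩
    rcases hc.2 with h' | h'
    · exact h' hall.1
    · exact h' hall.2.1
  · rw [hc.1]; exact rightEnd_boundary hrL
  · rw [hc.1]; exact topEnd_boundary hrL

lemma charge_injOn (hk : 1 ≤ k) (hl : 1 ≤ l) (L : Finset (ℤ × ℤ)) :
    Set.InjOn (charge k l L) (badIdx k l L) := by
  intro ab hab ab' hab' he
  obtain ⟨r, hr, hrL, hc⟩ := charge_spec hab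
  obtain ⟨r', hr', hrL', hc'⟩ := charge_spec hab'
  rcases hc with ⟨e1, g1⟩ | ⟨e1, g1⟩ | ⟨e1, g1⟩ <;>
    rcases hc' with ⟨e2, g2⟩ | ⟨e2, g2⟩ | ⟨e2, g2⟩ <;>
    rw [e1, e2] at he <;>
    simp only [Prod.mk.injEq, Fin.ext_iff] at he
  · exact blockOf_unique hk hl hr (he.1 ▸ hr')
  · exact absurd he.2 (by decide)
  · exact absurd he.2 (by decide)
  · exact absurd he.2 (by decide)
  · have := rightEnd_inj hrL hrL' g1 g2 he.1
    exact blockOf_unique hk hl hr (this ▸ hr')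
  · exact absurd he.2 (by decide)
  · exact absurd he.2 (by decide)
  · exact absurd he.2 (by decide)
  · have := topEnd_inj hrL hrL' g1 g2 he.1
    exact blockOf_unique hk hl hr (this ▸ hr')

lemma ncard_prod' {α β : Type*} (s : Set α) (t : Set β) :
    (s ×ˢ t).ncard = s.ncard * t.ncard := by
  rw [← Nat.card_coe_set_eq, Nat.card_congr (Equiv.Set.prod s t), Nat.card_prod,
    Nat.card_coe_set_eq, Nat.card_coe_set_eq]

lemma badIdx_ncard_le (hk : 1 ≤ k) (hl : 1 ≤ l) (L : Finset (ℤ × ℤ)) :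
    (badIdx k l L).ncard ≤ 3 * (latBoundary L).card := by
  have hmaps : ∀ ab ∈ badIdx k l L,
      charge k l L ab ∈ (↑(latBoundary L) : Set (ℤ × ℤ)) ×ˢ (Set.univ : Set (Fin 3)) :=
    fun ab hab => ⟨charge_fst_mem hab, trivial⟩
  have hfin : ((↑(latBoundary L) : Set (ℤ × ℤ)) ×ˢ (Set.univ : Set (Fin 3))).Finite :=
    (latBoundary L).finite_toSet.prod Set.finite_univ
  calc (badIdx k l L).ncard
      ≤ ((↑(latBoundary L) : Set (ℤ × ℤ)) ×ˢ (Set.univ : Set (Fin 3))).ncard :=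
        Set.ncard_le_ncard_of_injOn _ hmaps (charge_injOn hk hl L) hfin
    _ = 3 * (latBoundary L).card := by
        rw [ncard_prod', Set.ncard_coe_finset, Set.ncard_univ, Nat.card_eq_fintype_card,
          Fintype.card_fin, Nat.mul_comm]

lemma badIdx_finite (hk : 1 ≤ k) (hl : 1 ≤ l) (L : Finset (ℤ × ℤ)) :
    (badIdx k l L).Finite := by
  apply Set.Finite.of_finite_image (f := charge k l L) ?_ (charge_injOn hk hl L)
  apply Set.Finite.subset ((latBoundary L).finite_toSet.prod (Set.finite_univ (α := Fin 3)))
  rintro _ ⟨ab, hab, rfl⟩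
  exact ⟨charge_fst_mem hab, trivial⟩

lemma betaKL_le (hk : 1 ≤ k) (hl : 1 ≤ l) (L : Finset (ℤ × ℤ)) :
    betaKL k l L ≤ k * l * (3 * (latBoundary L).card) := by
  rw [betaKL]
  set f : ℤ × ℤ → ℤ × ℤ := fun p => (p.1 / (k : ℤ), p.2 / (l : ℤ)) with hf
  have hcard : (L \ gridPart k l L).card ≤ k * l * ((L \ gridPart k l L).image f).card := by
    apply Finset.card_le_mul_card_image
    intro ab _
    calc ((L \ gridPart k l L).filter (fun p => f p = ab)).card
        ≤ (blockOf k l ab).card := by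
          apply Finset.card_le_card
          intro p hp
          rw [Finset.mem_filter] at hp
          rw [← hp.2]
          exact mem_blockOf_self hk hl p
      _ = k * l := card_Zrect k l _
  refine hcard.trans ?_
  apply Nat.mul_le_mul_left
  have hsub : (↑((L \ gridPart k l L).image f) : Set (ℤ × ℤ)) ⊆ badIdx k l L := by
    intro ab hab
    obtain ⟨p, hp, rfl⟩ := Finset.mem_image.1 hab
    rw [Finset.mem_sdiff] at hp
    have hpb : p ∈ blockOf k l (f p) := mem_blockOf_self hk hl p
    refine ⟨⟨p, hpb, hp.1⟩, fun hsub => hp.2 (mem_gridPart.2 ⟨f p, hpb, hsub⟩)⟩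
  calc ((L \ gridPart k l L).image f).card
      = (↑((L \ gridPart k l L).image f) : Set (ℤ × ℤ)).ncard :=
        (Set.ncard_coe_finset _).symm
    _ ≤ (badIdx k l L).ncard := Set.ncard_le_ncard hsub (badIdx_finite hk hl L)
    _ ≤ 3 * (latBoundary L).card := badIdx_ncard_le hk hl L

end Charge

section Counting

variable {A : Type*} [Fintype A] {k l : ℕ}

lemma patternCount_le_main {U : Set ((ℤ × ℤ) → A)}
    (hinv : ∀ v : ℤ × ℤ, ∀ x ∈ U, (fun p => x (p + v)) ∈ U)
    (hk : 1 ≤ k) (hl : 1 ≤ l) (L : Finset (ℤ × ℤ)) :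
    patternCount U L ≤
      patternCount U (Zrect k l (0, 0)) ^ alphaKL k l L * Fintype.card A ^ betaKL k l L := by
  classical
  set G : Finset (ℤ × ℤ) := (goodIdx_finite hk hl L).toFinset with hG
  set B : Finset (ℤ × ℤ) := L \ gridPart k l L with hB
  set Zkl : Finset (ℤ × ℤ) := Zrect k l ((0 : ℤ), (0 : ℤ)) with hZkl
  set Pkl : Set ((↥Zkl) → A) := patSet U Zkl with hPkl
  -- the chosen configuration extending a pattern
  have hcx : ∀ f : ↥(patSet U L), ∃ x : (ℤ × ℤ) → A, x ∈ U ∧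
      (fun p : ↥L => x (p : ℤ × ℤ)) = (f : (↥L) → A) := fun f => f.2
  choose cx hcxU hcxr using hcx
  -- the encoding map
  have hoff : ∀ (ab : ℤ × ℤ) (q : ℤ × ℤ), q ∈ Zkl →
      ((q.1 + (k : ℤ) * ab.1, q.2 + (l : ℤ) * ab.2) : ℤ × ℤ) ∈ blockOf k l ab := by
    intro ab q hq
    rw [hZkl, mem_Zrect] at hq
    rw [mem_blockOf]
    dsimp only at hq ⊢
    omega
  set φ : ↥(patSet U L) → ((↥B) → A) × ((↥G) → ↥Pkl) :=
    fun f => (fun p => cx f (p : ℤ × ℤ),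
      fun ab => ⟨fun q => cx f ((q : ℤ × ℤ) + ((k : ℤ) * (ab : ℤ × ℤ).1,
        (l : ℤ) * (ab : ℤ × ℤ).2)),
        ⟨fun p => cx f (p + ((k : ℤ) * (ab : ℤ × ℤ).1, (l : ℤ) * (ab : ℤ × ℤ).2)),
          hinv _ _ (hcxU f), rfl⟩⟩) with hφ
  have hinj : Function.Injective φ := by
    intro f g he
    have he1 := congrArg Prod.fst he
    have he2 := congrArg Prod.snd he
    simp only [hφ] at he1 he2
    apply Subtype.ext
    rw [← hcxr f, ← hcxr g]
    funext p
    by_cases hp : (p : ℤ × ℤ) ∈ gridPart k l L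
    · obtain ⟨ab, hpb, hbs⟩ := mem_gridPart.1 hp
      have hab : ab ∈ G := by rw [hG, Set.Finite.mem_toFinset]; exact hbs
      set q : ℤ × ℤ := ((p : ℤ × ℤ).1 - (k : ℤ) * ab.1, (p : ℤ × ℤ).2 - (l : ℤ) * ab.2)
        with hq
      have hqm : q ∈ Zkl := by
        rw [mem_blockOf] at hpb
        rw [hZkl, mem_Zrect]
        simp only [hq]
        omega
      have := congrFun (Subtype.ext_iff.1 (congrFun he2 ⟨ab, hab⟩)) ⟨q, hqm⟩
      dsimp only at this
      have hqp : q + (((k : ℤ) * ab.1, (l : ℤ) * ab.2) : ℤ × ℤ) = (p : ℤ × ℤ) := by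
        rw [hq]
        rw [Prod.ext_iff]
        constructor <;> simp <;> ring
      rw [hqp] at this
      exact this
    · have hpB : (p : ℤ × ℤ) ∈ B := Finset.mem_sdiff.2 ⟨p.2, hp⟩
      exact congrFun he1 ⟨(p : ℤ × ℤ), hpB⟩
  -- cardinality bookkeeping
  have hcard : Nat.card ↥(patSet U L) ≤ Nat.card (((↥B) → A) × ((↥G) → ↥Pkl)) :=
    Nat.card_le_card_of_injective φ hinj
  rw [Nat.card_prod, Nat.card_fun, Nat.card_fun, Nat.card_eq_fintype_card (α := A),
    Nat.card_eq_finsetCard, Nat.card_eq_finsetCard, Nat.card_coe_set_eq,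
    Nat.card_coe_set_eq] at hcard
  calc patternCount U L = (patSet U L).ncard := patternCount_eq U L
    _ ≤ Fintype.card A ^ B.card * Pkl.ncard ^ G.card := hcard
    _ = patternCount U (Zrect k l (0, 0)) ^ alphaKL k l L * Fintype.card A ^ betaKL k l L := by
        rw [Nat.mul_comm, ← patternCount_eq, ← alphaKL_eq hk hl]
        rfl
  done

end Counting

section Analysis

variable {A : Type*} [Fintype A]

/-- The term in the rectangular entropy. -/
noncomputable def entTerm (U : Set ((ℤ × ℤ) → A)) (L : Finset (ℤ × ℤ)) : ℝ :=
  (1 / (L.card : ℝ)) * Real.log (patternCount U L)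

lemma rectEntropy_eq_iInf (U : Set ((ℤ × ℤ) → A)) :
    rectEntropy U = ⨅ mn : ℕ × ℕ, entTerm U (Zrect (mn.1 + 1) (mn.2 + 1) (0, 0)) := by
  rw [rectEntropy]
  congr 1
  funext mn
  rw [entTerm, card_Zrect]

lemma one_le_cast_patternCount {U : Set ((ℤ × ℤ) → A)} (hne : U.Nonempty)
    (L : Finset (ℤ × ℤ)) : (1 : ℝ) ≤ (patternCount U L : ℝ) := by
  exact_mod_cast one_le_patternCount hne L

lemma entTerm_nonneg {U : Set ((ℤ × ℤ) → A)} (hne : U.Nonempty) (L : Finset (ℤ × ℤ)) :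
    0 ≤ entTerm U L := by
  apply mul_nonneg
  · positivity
  · exact Real.log_nonneg (one_le_cast_patternCount hne L)

lemma entTerm_le_logN (hcard : 2 ≤ Fintype.card A) {U : Set ((ℤ × ℤ) → A)}
    (hne : U.Nonempty) (L : Finset (ℤ × ℤ)) :
    entTerm U L ≤ Real.log (Fintype.card A) := by
  have hlogN : (0 : ℝ) ≤ Real.log (Fintype.card A) :=
    Real.log_nonneg (by exact_mod_cast Nat.one_le_of_lt hcard)
  rcases Nat.eq_zero_or_pos L.card with h0 | h0
  · rw [entTerm, h0]
    simpa using hlogN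
  · have hΓ : (0 : ℝ) < (patternCount U L : ℝ) :=
      lt_of_lt_of_le one_pos (one_le_cast_patternCount hne L)
    have hle : Real.log (patternCount U L) ≤ (L.card : ℝ) * Real.log (Fintype.card A) := by
      calc Real.log (patternCount U L)
          ≤ Real.log ((Fintype.card A : ℝ) ^ L.card) := by
            apply Real.log_le_log hΓ
            exact_mod_cast patternCount_le_pow U L
        _ = L.card * Real.log (Fintype.card A) := Real.log_pow _ _
    rw [entTerm]
    have hc : (0 : ℝ) < (L.card : ℝ) := by exact_mod_cast h0
    calc (1 / (L.card : ℝ)) * Real.log (patternCount U L)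
        ≤ (1 / (L.card : ℝ)) * ((L.card : ℝ) * Real.log (Fintype.card A)) :=
          mul_le_mul_of_nonneg_left hle (by positivity)
      _ = Real.log (Fintype.card A) := by field_simp

lemma rectEntropy_bddBelow (U : Set ((ℤ × ℤ) → A)) (hne : U.Nonempty) :
    BddBelow (Set.range fun mn : ℕ × ℕ => entTerm U (Zrect (mn.1 + 1) (mn.2 + 1) (0, 0))) := by
  refine ⟨0, ?_⟩
  rintro _ ⟨mn, rfl⟩
  exact entTerm_nonneg hne _

lemma rectEntropy_le_entTerm (U : Set ((ℤ × ℤ) → A)) (hne : U.Nonempty) (mn : ℕ × ℕ) :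
    rectEntropy U ≤ entTerm U (Zrect (mn.1 + 1) (mn.2 + 1) (0, 0)) := by
  rw [rectEntropy_eq_iInf]
  exact ciInf_le (rectEntropy_bddBelow U hne) mn

end Analysis

section HardDirection

variable {A : Type*} [Fintype A]

lemma card_mono_expanding {Ω : ℕ → Finset (ℤ × ℤ)} (hΩ : IsExpandingSystem Ω) (n : ℕ) :
    n ≤ (Ω n).card := by
  induction n with
  | zero => exact Nat.zero_le _
  | succ n ih => exact Nat.lt_of_le_of_lt ih (Finset.card_lt_card (hΩ.1 n))

lemma entropyAlong_le_rectEntropy (hcard : 2 ≤ Fintype.card A) {U : Set ((ℤ × ℤ) → A)}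
    (hne : U.Nonempty) (hinv : ∀ v : ℤ × ℤ, ∀ x ∈ U, (fun p => x (p + v)) ∈ U)
    (Ω : ℕ → Finset (ℤ × ℤ)) (hΩ : IsExpandingSystem Ω)
    (hbnd : Filter.limsup
      (fun n => ((latBoundary (Ω n)).card : ℝ) / ((Ω n).card : ℝ)) Filter.atTop = 0) :
    entropyAlong U Ω ≤ rectEntropy U := by
  have hN1 : (1 : ℝ) < (Fintype.card A : ℝ) := by exact_mod_cast hcard
  have hlogN : (0 : ℝ) < Real.log (Fintype.card A) := Real.log_pos hN1
  rw [rectEntropy_eq_iInf]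
  apply le_ciInf
  intro mn
  set k : ℕ := mn.1 + 1 with hk
  set l : ℕ := mn.2 + 1 with hl
  have hk1 : 1 ≤ k := Nat.le_add_left 1 mn.1
  have hl1 : 1 ≤ l := Nat.le_add_left 1 mn.2
  set gkl : ℝ := entTerm U (Zrect k l (0, 0)) with hgkl
  set X : ℝ := Real.log (patternCount U (Zrect k l (0, 0))) with hX
  have hX0 : 0 ≤ X := Real.log_nonneg (one_le_cast_patternCount hne _)
  have hgklX : gkl = (1 / ((k * l : ℕ) : ℝ)) * X := by
    rw [hgkl, entTerm, card_Zrect]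
  set Y : ℝ := Real.log (Fintype.card A) with hY
  set C : ℝ := 3 * (k * l : ℕ) * Y with hC
  have hC0 : 0 < C := by
    rw [hC]
    have : (0 : ℝ) < ((k * l : ℕ) : ℝ) := by
      have : 1 ≤ k * l := Nat.one_le_iff_ne_zero.2 (by positivity)
      exact_mod_cast this
    positivity
  set r : ℕ → ℝ := fun n => ((latBoundary (Ω n)).card : ℝ) / ((Ω n).card : ℝ) with hr
  have hr0 : ∀ n, 0 ≤ r n := fun n => by positivity
  have hr1 : ∀ n, r n ≤ 1 := by
    intro n
    rcases Nat.eq_zero_or_pos (Ω n).card with h0 | h0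
    · rw [hr]; simp [h0]
    · rw [hr]
      apply div_le_one_of_le₀
      · exact_mod_cast Finset.card_le_card (Finset.sdiff_subset)
      · positivity
  -- the key pointwise estimate
  have key : ∀ n, 1 ≤ (Ω n).card → entTerm U (Ω n) ≤ gkl + C * r n := by
    intro n hn
    set L : Finset (ℤ × ℤ) := Ω n with hL
    have hc0 : (0 : ℝ) < (L.card : ℝ) := by exact_mod_cast hn
    set c : ℝ := (L.card : ℝ) with hcc
    set d : ℝ := ((latBoundary L).card : ℝ) with hd
    have hd0 : 0 ≤ d := by positivity
    set α : ℕ := alphaKL k l L with hα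
    set β : ℕ := betaKL k l L with hβ
    have hkl0 : (0 : ℝ) < ((k * l : ℕ) : ℝ) := by
      have : 1 ≤ k * l := Nat.one_le_iff_ne_zero.2 (by positivity)
      exact_mod_cast this
    have hmain := patternCount_le_main hinv hk1 hl1 L
    have hΓ0 : (0 : ℝ) < (patternCount U L : ℝ) :=
      lt_of_lt_of_le one_pos (one_le_cast_patternCount hne L)
    have hΓkl1 : (1 : ℝ) ≤ (patternCount U (Zrect k l (0, 0)) : ℝ) :=
      one_le_cast_patternCount hne _
    have hlog : Real.log (patternCount U L) ≤ (α : ℝ) * X + (β : ℝ) * Y := by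
      calc Real.log (patternCount U L)
          ≤ Real.log ((patternCount U (Zrect k l (0, 0)) : ℝ) ^ α *
              (Fintype.card A : ℝ) ^ β) := by
            apply Real.log_le_log hΓ0
            exact_mod_cast hmain
        _ = (α : ℝ) * X + (β : ℝ) * Y := by
            rw [Real.log_mul (by positivity) (by positivity), Real.log_pow, Real.log_pow]

    have hbete : (β : ℝ) ≤ 3 * ((k * l : ℕ) : ℝ) * d := by
      have := betaKL_le hk1 hl1 L
      have hcast : (β : ℝ) ≤ ((k * l * (3 * (latBoundary L).card) : ℕ) : ℝ) := by
        exact_mod_cast this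
      refine hcast.trans (le_of_eq ?_)
      push_cast
      ring
    calc entTerm U L = (1 / c) * Real.log (patternCount U L) := rfl
      _ ≤ (1 / c) * ((α : ℝ) * X + (β : ℝ) * Y) :=
          mul_le_mul_of_nonneg_left hlog (by positivity)
      _ = ((α : ℝ) / c) * X + ((β : ℝ) / c) * Y := by ring
      _ ≤ (1 / ((k * l : ℕ) : ℝ)) * X + (3 * ((k * l : ℕ) : ℝ) * (d / c)) * Y := by
          apply add_le_add
          · apply mul_le_mul_of_nonneg_right ?_ hX0
            rw [div_le_div_iff₀ hc0 hkl0, one_mul, hα, hcc]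
            exact_mod_cast alpha_mul_le hk1 hl1 L
          · apply mul_le_mul_of_nonneg_right ?_ (le_of_lt hlogN)
            rw [div_le_iff₀ hc0]
            calc (β : ℝ) ≤ 3 * ((k * l : ℕ) : ℝ) * d := hbete
              _ = 3 * ((k * l : ℕ) : ℝ) * (d / c) * c := by
                  field_simp
      _ = gkl + C * r n := by
          rw [hgklX, hC]
          push_cast
          rw [hr]
          dsimp only
          rw [← hL, ← hd, ← hcc]
          ring
  have hevkey : ∀ᶠ n in Filter.atTop, entTerm U (Ω n) ≤ gkl + C * r n := by
    filter_upwards [Filter.eventually_ge_atTop 1] with n hn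
    exact key n (le_trans hn (card_mono_expanding hΩ n))
  have hcob : Filter.IsCoboundedUnder (· ≤ ·) Filter.atTop (fun n => entTerm U (Ω n)) :=
    Filter.isCoboundedUnder_le_of_le Filter.atTop (x := 0) (fun n => entTerm_nonneg hne _)
  have hmain : ∀ ε : ℝ, 0 < ε → entropyAlong U Ω ≤ gkl + ε := by
    intro ε hε
    have hbr : Filter.IsBoundedUnder (· ≤ ·) Filter.atTop r :=
      Filter.isBoundedUnder_of ⟨1, hr1⟩
    have hlt : Filter.limsup r Filter.atTop < ε / C := by
      rw [hr] at hbnd ⊢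
      rw [hbnd]
      positivity
    have hev2 := Filter.eventually_lt_of_limsup_lt hlt hbr
    have hev3 : ∀ᶠ n in Filter.atTop, entTerm U (Ω n) ≤ gkl + ε := by
      filter_upwards [hevkey, hev2] with n h1 h2
      calc entTerm U (Ω n) ≤ gkl + C * r n := h1
        _ ≤ gkl + C * (ε / C) := by
            apply add_le_add_right
            exact mul_le_mul_of_nonneg_left (le_of_lt h2) (le_of_lt hC0)
        _ = gkl + ε := by
            rw [mul_div_cancel₀ _ (ne_of_gt hC0)]
    exact Filter.limsup_le_of_le hcob hev3
  exact le_of_forall_pos_le_add hmain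

end HardDirection

section Squares

variable {A : Type*} [Fintype A]

/-- The expanding system of centered squares. -/
def sqSys (n : ℕ) : Finset (ℤ × ℤ) :=
  Zrect (2 * n + 1) (2 * n + 1) (-(n : ℤ), -(n : ℤ))

lemma mem_sqSys {n : ℕ} {p : ℤ × ℤ} :
    p ∈ sqSys n ↔ -(n : ℤ) ≤ p.1 ∧ p.1 ≤ n ∧ -(n : ℤ) ≤ p.2 ∧ p.2 ≤ n := by
  rw [sqSys, mem_Zrect]
  dsimp only
  omega

lemma sqSys_expanding : IsExpandingSystem sqSys := by
  constructor
  · intro n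
    rw [Finset.ssubset_iff_of_subset]
    · exact ⟨((n : ℤ) + 1, 0), mem_sqSys.2 (by push_cast; omega),
        fun h => by have := mem_sqSys.1 h; omega⟩
    · intro p hp
      have := mem_sqSys.1 hp
      exact mem_sqSys.2 (by push_cast; push_cast at this; omega)
  · intro p
    exact ⟨p.1.natAbs + p.2.natAbs, mem_sqSys.2 (by omega)⟩

lemma Zrect_image (k l : ℕ) (c v : ℤ × ℤ) :
    (Zrect k l c).image (· + v) = Zrect k l (c + v) := by
  ext p
  rw [Finset.mem_image]
  constructor
  · rintro ⟨q, hq, rfl⟩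
    rw [mem_Zrect] at hq
    rw [mem_Zrect, Prod.fst_add, Prod.snd_add, Prod.fst_add, Prod.snd_add]
    omega
  · intro hp
    rw [mem_Zrect, Prod.fst_add, Prod.snd_add] at hp
    refine ⟨p - v, mem_Zrect.2 ?_, by ring⟩
    rw [Prod.fst_sub, Prod.snd_sub]
    omega

lemma sqSys_card (n : ℕ) : (sqSys n).card = (2 * n + 1) * (2 * n + 1) :=
  card_Zrect _ _ _

lemma sqSys_boundary_card (n : ℕ) :
    (latBoundary (sqSys n)).card ≤ 4 * n + 1 := by
  have hsub : Zrect (2 * n) (2 * n) (-(n : ℤ), -(n : ℤ)) ⊆ latInterior (sqSys n) := by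
    intro p hp
    rw [mem_Zrect] at hp
    dsimp only at hp
    rw [latInterior, Finset.mem_filter]
    refine ⟨mem_sqSys.2 (by omega), mem_sqSys.2 (by dsimp only; omega),
      mem_sqSys.2 (by dsimp only; omega), mem_sqSys.2 (by dsimp only; omega)⟩
  have h1 : (latBoundary (sqSys n)).card = (sqSys n).card - (latInterior (sqSys n)).card := by
    rw [latBoundary, Finset.card_sdiff_of_subset
      (show latInterior (sqSys n) ⊆ sqSys n from Finset.filter_subset _ _)]
  have h2 : (2 * n) * (2 * n) ≤ (latInterior (sqSys n)).card := by
    calc (2 * n) * (2 * n) = (Zrect (2 * n) (2 * n) (-(n : ℤ), -(n : ℤ))).card :=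
          (card_Zrect _ _ _).symm
      _ ≤ _ := Finset.card_le_card hsub
  have h3 := sqSys_card n
  have e1 : (2 * n + 1) * (2 * n + 1) = (2 * n) * (2 * n) + (4 * n + 1) := by ring
  rw [h1, h3, e1]
  calc (2 * n) * (2 * n) + (4 * n + 1) - (latInterior (sqSys n)).card
      ≤ (2 * n) * (2 * n) + (4 * n + 1) - (2 * n) * (2 * n) := Nat.sub_le_sub_left h2 _
    _ = 4 * n + 1 := Nat.add_sub_cancel_left _ _

lemma sqSys_ratio_tendsto :
    Filter.Tendsto (fun n => ((latBoundary (sqSys n)).card : ℝ) / ((sqSys n).card : ℝ))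
      Filter.atTop (nhds 0) := by
  apply squeeze_zero' (g := fun n : ℕ => 2 / (n : ℝ))
  · exact Filter.Eventually.of_forall (fun n => by positivity)
  · filter_upwards [Filter.eventually_ge_atTop 1] with n hn
    have hd : ((latBoundary (sqSys n)).card : ℝ) ≤ (4 * n + 1 : ℝ) := by
      exact_mod_cast sqSys_boundary_card n
    have hc : ((sqSys n).card : ℝ) = ((2 * n + 1 : ℕ) : ℝ) * ((2 * n + 1 : ℕ) : ℝ) := by
      rw [sqSys_card]; push_cast; ring
    have hn1 : (1 : ℝ) ≤ (n : ℝ) := by exact_mod_cast hn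
    have hpos : (0 : ℝ) < ((2 * n + 1 : ℕ) : ℝ) * ((2 * n + 1 : ℕ) : ℝ) := by positivity
    rw [hc]
    calc ((latBoundary (sqSys n)).card : ℝ) / (((2 * n + 1 : ℕ) : ℝ) * ((2 * n + 1 : ℕ) : ℝ))
        ≤ (4 * n + 1 : ℝ) / (((2 * n + 1 : ℕ) : ℝ) * ((2 * n + 1 : ℕ) : ℝ)) := by
          gcongr
      _ ≤ 2 / (n : ℝ) := by
          rw [div_le_div_iff₀ hpos (by linarith)]
          push_cast
          nlinarith
  · exact tendsto_const_div_atTop_nhds_zero_nat 2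

lemma sqSys_ratio_limsup :
    Filter.limsup (fun n => ((latBoundary (sqSys n)).card : ℝ) / ((sqSys n).card : ℝ))
      Filter.atTop = 0 :=
  sqSys_ratio_tendsto.limsup_eq

lemma rectEntropy_le_entropyAlong_sqSys (hcard : 2 ≤ Fintype.card A)
    {U : Set ((ℤ × ℤ) → A)} (hne : U.Nonempty)
    (hinv : ∀ v : ℤ × ℤ, ∀ x ∈ U, (fun p => x (p + v)) ∈ U) :
    rectEntropy U ≤ entropyAlong U sqSys := by
  have hterm : ∀ n, entTerm U (sqSys n) =
      entTerm U (Zrect (2 * n + 1) (2 * n + 1) (0, 0)) := by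
    intro n
    have himg : sqSys n = (Zrect (2 * n + 1) (2 * n + 1) ((0 : ℤ), (0 : ℤ))).image
        (· + (-(n : ℤ), -(n : ℤ))) := by
      rw [Zrect_image, show ((0 : ℤ), (0 : ℤ)) + (-(n : ℤ), -(n : ℤ)) = (-(n : ℤ), -(n : ℤ))
        from by simp, sqSys]
    rw [entTerm, entTerm, himg, patternCount_translate hinv, Finset.card_image_of_injective]
    exact fun a b hab => by simpa using hab
  have hlow : ∀ n, rectEntropy U ≤ entTerm U (sqSys n) := by
    intro n
    rw [hterm n]
    exact rectEntropy_le_entTerm U hne (2 * n, 2 * n)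
  have hbdd : Filter.IsBoundedUnder (· ≤ ·) Filter.atTop (fun n => entTerm U (sqSys n)) :=
    Filter.isBoundedUnder_of ⟨Real.log (Fintype.card A),
      fun n => entTerm_le_logN hcard hne _⟩
  exact Filter.le_limsup_of_frequently_le
    ((Filter.Eventually.of_forall hlow).frequently) hbdd

end Squares

section Main

theorem rectEntropy_eq_sSup_main {A : Type*} [Fintype A]
    (hcard : 2 ≤ Fintype.card A)
    (U : Set ((ℤ × ℤ) → A)) (hne : U.Nonempty)
    (hinv : ∀ v : ℤ × ℤ, ∀ x ∈ U, (fun p => x (p + v)) ∈ U) :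
    rectEntropy U = sSup {x : ℝ | ∃ Ω : ℕ → Finset (ℤ × ℤ), IsExpandingSystem Ω ∧
      Filter.limsup
        (fun n => ((latBoundary (Ω n)).card : ℝ) / ((Ω n).card : ℝ)) Filter.atTop = 0 ∧
      x = entropyAlong U Ω} := by
  set S := {x : ℝ | ∃ Ω : ℕ → Finset (ℤ × ℤ), IsExpandingSystem Ω ∧
      Filter.limsup
        (fun n => ((latBoundary (Ω n)).card : ℝ) / ((Ω n).card : ℝ)) Filter.atTop = 0 ∧
      x = entropyAlong U Ω} with hS
  have hub : ∀ x ∈ S, x ≤ rectEntropy U := by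
    rintro x ⟨Ω, hΩ, hlim, rfl⟩
    exact entropyAlong_le_rectEntropy hcard hne hinv Ω hΩ hlim
  have hmem : rectEntropy U ∈ S := by
    refine ⟨sqSys, sqSys_expanding, sqSys_ratio_limsup, ?_⟩
    exact le_antisymm
      (entropyAlong_le_rectEntropy hcard hne hinv sqSys sqSys_expanding sqSys_ratio_limsup)
      (rectEntropy_le_entropyAlong_sqSys hcard hne hinv) |>.symm
  exact le_antisymm (le_csSup ⟨rectEntropy U, fun x hx => hub x hx⟩ hmem)
    (csSup_le ⟨rectEntropy U, hmem⟩ hub)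

end Main

/-- (1.21): the rectangular entropy equals the genuinely two-dimensional
entropy, the supremum of `h_Ω(U)` over all genuinely two-dimensional expanding systems. -/
theorem rectEntropy_eq_sSup_genuinely_two_dimensional {A : Type*} [Fintype A]
    [TopologicalSpace A] [DiscreteTopology A] (hcard : 2 ≤ Fintype.card A)
    (U : Set ((ℤ × ℤ) → A)) (hU : IsShiftSpace U) :
    rectEntropy U = sSup {x : ℝ | ∃ Ω : ℕ → Finset (ℤ × ℤ), IsExpandingSystem Ω ∧
      Filter.limsup
        (fun n => ((latBoundary (Ω n)).card : ℝ) / ((Ω n).card : ℝ)) Filter.atTop = 0 ∧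
      x = entropyAlong U Ω} := by
  obtain ⟨hne, -, hinv⟩ := hU
  exact rectEntropy_eq_sSup_main hcard U hne hinv
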